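/- Let C be a class of matrices. If C contains a matrix having a row with at least two nonzero entries, then C contains a matrix D having a row with two nonzero entries of the same sign, i.e., there exist an index i and distinct indices j ≠ k with D_{i,j}·D_{i,k} > 0. -/

import Mathlib

/-- The permutation matrix of a permutation `σ`: its `(i, j)` entry is `1` iff `i = σ j`. -/
def permMat {m : ℕ} (σ : Equiv.Perm (Fin m)) : Matrix (Fin m) (Fin m) ℤ :=
  Matrix.of fun i j => if i = σ j then 1 else 0

/-- `extMat A n` is the block-diagonal matrix `diag(A, I_n)`. -/
def extMat {k : ℕ} (A : Matrix (Fin k) (Fin k) ℤ) (n : ℕ) :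
    Matrix (Fin (k + n)) (Fin (k + n)) ℤ :=
  Matrix.reindex finSumFinEquiv finSumFinEquiv
    (Matrix.fromBlocks A 0 0 (1 : Matrix (Fin n) (Fin n) ℤ))

/-- A *class of matrices*: a set of square integer matrices of arbitrary sizes, closed
under conjugation by permutation matrices, extension by identity blocks, containing all
identity matrices, and closed under products of equal-size matrices. -/
structure MatrixClass where
  carrier : ∀ k : ℕ, Set (Matrix (Fin k) (Fin k) ℤ)
  perm_mem : ∀ {k : ℕ} (A : Matrix (Fin k) (Fin k) ℤ), A ∈ carrier k →
    ∀ σ : Equiv.Perm (Fin k), permMat σ * A * permMat σ⁻¹ ∈ carrier k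
  ext_mem : ∀ {k : ℕ} (A : Matrix (Fin k) (Fin k) ℤ), A ∈ carrier k →
    ∀ n : ℕ, 1 ≤ n → extMat A n ∈ carrier (k + n)
  one_mem : ∀ n : ℕ, 1 ≤ n → (1 : Matrix (Fin n) (Fin n) ℤ) ∈ carrier n
  mul_mem : ∀ {k : ℕ} (A B : Matrix (Fin k) (Fin k) ℤ),
    A ∈ carrier k → B ∈ carrier k → A * B ∈ carrier k

lemma permMat_conj_apply {m : ℕ} (σ : Equiv.Perm (Fin m)) (B : Matrix (Fin m) (Fin m) ℤ)
    (r c : Fin m) : (permMat σ * B * permMat σ⁻¹) r c = B (σ⁻¹ r) (σ⁻¹ c) := by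
  have h1 : ∀ (X : Matrix (Fin m) (Fin m) ℤ) r c, (X * permMat σ⁻¹) r c = X r (σ⁻¹ c) := by
    intro X r c
    simp [permMat, Matrix.mul_apply]
  have h2 : (permMat σ * B) r (σ⁻¹ c) = B (σ⁻¹ r) (σ⁻¹ c) := by
    rw [Matrix.mul_apply]
    rw [Finset.sum_eq_single (σ⁻¹ r)]
    · simp [permMat]
    · intro l _ hl
      have : r ≠ σ l := fun h => hl (by simp [h])
      simp [permMat, this]
    · simp
  rw [h1, h2]

lemma extMat_ll {k : ℕ} (A : Matrix (Fin k) (Fin k) ℤ) (p q : Fin k) :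
    extMat A 1 (Fin.castAdd 1 p) (Fin.castAdd 1 q) = A p q := by
  simp [extMat]

lemma last_eq_natAdd (k : ℕ) : Fin.last k = Fin.natAdd k (0 : Fin 1) := by ext; simp

lemma extMat_le {k : ℕ} (A : Matrix (Fin k) (Fin k) ℤ) (p : Fin k) :
    extMat A 1 (Fin.castAdd 1 p) (Fin.last k) = 0 := by
  rw [last_eq_natAdd]; simp [extMat]

lemma extMat_el {k : ℕ} (A : Matrix (Fin k) (Fin k) ℤ) (q : Fin k) :
    extMat A 1 (Fin.last k) (Fin.castAdd 1 q) = 0 := by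
  rw [last_eq_natAdd]; simp [extMat]

lemma extMat_ee {k : ℕ} (A : Matrix (Fin k) (Fin k) ℤ) :
    extMat A 1 (Fin.last k) (Fin.last k) = 1 := by
  rw [last_eq_natAdd]; simp [extMat]

theorem class_row_same_sign (C : MatrixClass)
    (h : ∃ (k : ℕ) (A : Matrix (Fin k) (Fin k) ℤ), A ∈ C.carrier k ∧
      ∃ (i j₁ j₂ : Fin k), j₁ ≠ j₂ ∧ A i j₁ ≠ 0 ∧ A i j₂ ≠ 0) :
    ∃ (k : ℕ) (D : Matrix (Fin k) (Fin k) ℤ), D ∈ C.carrier k ∧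
      ∃ (i j₁ j₂ : Fin k), j₁ ≠ j₂ ∧ 0 < D i j₁ * D i j₂ := by
  obtain ⟨k, A, hA, i, j₁, j₂, hjj, ha, hb⟩ := h
  rcases lt_trichotomy (A i j₁ * A i j₂) 0 with hneg | hzero | hpos
  · -- opposite signs
    by_cases hthird : ∃ m : Fin k, m ≠ j₁ ∧ m ≠ j₂ ∧ A i m ≠ 0
    · -- a third nonzero entry: one of the two products is positive
      obtain ⟨m, hm1, hm2, hm⟩ := hthird
      rcases (mul_ne_zero ha hm).lt_or_gt with h1 | h1
      · have h2 : 0 < (A i j₁ * A i j₂) * (A i j₁ * A i m) := mul_pos_of_neg_of_neg hneg h1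
        exact ⟨k, A, hA, i, j₂, m, fun h => hm2 h.symm, by nlinarith [sq_nonneg (A i j₁)]⟩
      · exact ⟨k, A, hA, i, j₁, m, fun h => hm1 h.symm, h1⟩
    · push_neg at hthird
      -- row i of A has exactly two nonzero entries, of opposite signs
      set B : Matrix (Fin (k + 1)) (Fin (k + 1)) ℤ := extMat A 1 with hB
      have hBmem : B ∈ C.carrier (k + 1) := C.ext_mem A hA 1 le_rfl
      set i' : Fin (k + 1) := Fin.castAdd 1 i with hi'
      set j₁' : Fin (k + 1) := Fin.castAdd 1 j₁ with hj₁'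
      set j₂' : Fin (k + 1) := Fin.castAdd 1 j₂ with hj₂'
      set e : Fin (k + 1) := Fin.last k with he
      have hcast_ne_last : ∀ p : Fin k, Fin.castAdd 1 p ≠ Fin.last k := by
        intro p hp
        have := congrArg Fin.val hp
        simp at this
        omega
      have hj12' : j₁' ≠ j₂' := fun h => hjj (by
        have := congrArg Fin.val h; exact Fin.ext this)
      have hj₁e : j₁' ≠ e := hcast_ne_last j₁
      have hj₂e : j₂' ≠ e := hcast_ne_last j₂
      have hie : i' ≠ e := hcast_ne_last i
      set τ : Equiv.Perm (Fin (k + 1)) := (Equiv.swap j₂' e).trans (Equiv.swap j₁' i') with hτ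
      set σ : Equiv.Perm (Fin (k + 1)) := τ⁻¹ with hσ
      have hσinv : σ⁻¹ = τ := by simp [hσ]
      have hτj₁ : τ j₁' = i' := by
        simp [hτ, Equiv.swap_apply_of_ne_of_ne hj12' hj₁e]
      have hτj₂ : τ j₂' = e := by
        simp [hτ, Equiv.swap_apply_of_ne_of_ne (Ne.symm hj₁e) (Ne.symm hie)]
      set M : Matrix (Fin (k + 1)) (Fin (k + 1)) ℤ := B * (permMat σ * B * permMat σ⁻¹) with hM
      have hMmem : M ∈ C.carrier (k + 1) := C.mul_mem _ _ hBmem (C.perm_mem B hBmem σ)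
      -- row i of B vanishes off {j₁', j₂'}
      have hrow : ∀ l : Fin (k + 1), l ≠ j₁' → l ≠ j₂' → B i' l = 0 := by
        intro l hl1 hl2
        induction l using Fin.lastCases with
        | last => exact extMat_le A i
        | cast p =>
          have hp1 : p ≠ j₁ := fun h => hl1 (by rw [h]; rfl)
          have hp2 : p ≠ j₂ := fun h => hl2 (by rw [h]; rfl)
          rw [show Fin.castSucc p = Fin.castAdd 1 p from rfl, hB, hi', extMat_ll]
          exact hthird p hp1 hp2
      -- the key entry computation
      have hkey : ∀ c₀ : Fin (k + 1),
          M i' (σ c₀) = A i j₁ * B i' c₀ + A i j₂ * B e c₀ := by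
        intro c₀
        rw [hM, Matrix.mul_apply]
        have hterm : ∀ l, B i' l * (permMat σ * B * permMat σ⁻¹) l (σ c₀)
            = B i' l * B (τ l) c₀ := by
          intro l
          rw [permMat_conj_apply, hσinv]
          congr 2
          exact (by simp : τ⁻¹⁻¹ (τ⁻¹ c₀) = c₀) |>.symm ▸ (by simp [hσ])
        simp only [hterm]
        rw [← Finset.sum_subset (Finset.subset_univ ({j₁', j₂'} : Finset (Fin (k+1))))]
        · rw [Finset.sum_pair hj12', hτj₁, hτj₂, hB, hi', hj₁', hj₂', he, extMat_ll, extMat_ll]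
        · intro x _ hx
          simp only [Finset.mem_insert, Finset.mem_singleton] at hx
          push_neg at hx
          rw [hrow x hx.1 hx.2, zero_mul]
      have hv1 : M i' (σ j₁') = A i j₁ * A i j₁ := by
        rw [hkey, hj₁', hB, hi', he, extMat_ll, extMat_el, mul_zero, add_zero]
      have hv2 : M i' (σ j₂') = A i j₁ * A i j₂ := by
        rw [hkey, hj₂', hB, hi', he, extMat_ll, extMat_el, mul_zero, add_zero]
      have hv3 : M i' (σ e) = A i j₂ := by
        rw [hkey, he, hB, hi', extMat_le, extMat_ee, mul_zero, zero_add, mul_one]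
      rcases hb.lt_or_gt with hbneg | hbpos
      · -- A i j₂ < 0 : use columns σ j₂' and σ e  (ab < 0, b < 0)
        refine ⟨k + 1, M, hMmem, i', σ j₂', σ e, fun h => hj₂e (σ.injective h), ?_⟩
        rw [hv2, hv3]
        exact mul_pos_of_neg_of_neg hneg hbneg
      · -- A i j₂ > 0 : use columns σ j₁' and σ e  (a² > 0, b > 0)
        refine ⟨k + 1, M, hMmem, i', σ j₁', σ e, fun h => hj₁e (σ.injective h), ?_⟩
        rw [hv1, hv3]
        exact mul_pos (mul_self_pos.mpr ha) hbpos
  · exact absurd hzero (mul_ne_zero ha hb)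
  · exact ⟨k, A, hA, i, j₁, j₂, hjj, hpos⟩
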